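/- Untwisted reflection formula outside G₂: let R be a finite reduced irreducible crystallographic root system with positive roots R₊ such that (β, α∨) ∈ {−2,−1,0,1,2} for all α, β ∈ R (this excludes exactly type G₂). Then for every dominant weight λ and every α ∈ R₊, the vector λ − s_α(λ) = (λ,α∨)·α satisfies n(λ, s_α) = (λ, α∨). -/

import Mathlib

open scoped RealInnerProductSpace

/-- A finite reduced irreducible crystallographic root system in a real inner
product space `V`. -/
structure IsRootSystem {V : Type*} [NormedAddCommGroup V] [InnerProductSpace ℝ V]
    (R : Set V) : Prop where
  finite : R.Finite
  span_top : Submodule.span ℝ R = ⊤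
  ne_zero : ∀ α ∈ R, α ≠ (0 : V)
  reflect_mem : ∀ α ∈ R, ∀ β ∈ R, β - (2 * ⟪β, α⟫ / ⟪α, α⟫) • α ∈ R
  integral : ∀ α ∈ R, ∀ β ∈ R, ∃ k : ℤ, 2 * ⟪β, α⟫ / ⟪α, α⟫ = (k : ℝ)
  reduced : ∀ α ∈ R, ∀ c : ℝ, c • α ∈ R → c = 1 ∨ c = -1
  irreducible : ¬ ∃ R₁ R₂ : Set V, R₁.Nonempty ∧ R₂.Nonempty ∧ R = R₁ ∪ R₂ ∧
    ∀ α ∈ R₁, ∀ β ∈ R₂, ⟪α, β⟫ = 0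

/-- The set of positive roots determined by a linear functional `f` nonvanishing
on the roots. -/
def posRoots {V : Type*} [NormedAddCommGroup V] [InnerProductSpace ℝ V]
    (R : Set V) (f : V →ₗ[ℝ] ℝ) : Set V :=
  {α | α ∈ R ∧ 0 < f α}

/-- The set of lengths of decompositions of `μ` into a sum of positive roots
(with repetitions). -/
def decompLengths {V : Type*} [NormedAddCommGroup V] [InnerProductSpace ℝ V]
    (P : Set V) (μ : V) : Set ℕ :=
  {N | ∃ l : List V, (∀ β ∈ l, β ∈ P) ∧ l.sum = μ ∧ l.length = N}

/-- Untwisted reflection formula outside `G₂`: if all Cartan pairings of `R` lie in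
`{-2,…,2}` (which excludes exactly type `G₂`), then for every dominant weight `λ`
and every positive root `α`, the vector `λ - s_α(λ) = (λ,α∨) • α` is a sum of
positive roots and the minimal number of positive roots summing to it equals
`(λ, α∨)`. -/
lemma aux_list_sum {V : Type*} [NormedAddCommGroup V] [InnerProductSpace ℝ V]
    (α : V) (l : List V) :
    (l.map (fun β => 2 * ⟪β, α⟫ / ⟪α, α⟫)).sum = 2 * ⟪l.sum, α⟫ / ⟪α, α⟫ := by
  induction l with
  | nil => simp
  | cons x xs ih =>
      simp only [List.map_cons, List.sum_cons, ih, inner_add_left]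
      ring

theorem reflection_formula_untwisted {V : Type*} [NormedAddCommGroup V]
    [InnerProductSpace ℝ V] [FiniteDimensional ℝ V]
    (R : Set V) (hR : IsRootSystem R)
    (f : V →ₗ[ℝ] ℝ) (hf : ∀ α ∈ R, f α ≠ 0)
    (hnoG2 : ∀ α ∈ R, ∀ β ∈ R,
      2 * ⟪β, α⟫ / ⟪α, α⟫ = -2 ∨ 2 * ⟪β, α⟫ / ⟪α, α⟫ = -1 ∨ 2 * ⟪β, α⟫ / ⟪α, α⟫ = 0 ∨
      2 * ⟪β, α⟫ / ⟪α, α⟫ = 1 ∨ 2 * ⟪β, α⟫ / ⟪α, α⟫ = 2)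
    (lam : V) (hlam : ∀ α ∈ posRoots R f, ∃ k : ℕ, 2 * ⟪lam, α⟫ / ⟪α, α⟫ = (k : ℝ))
    (α : V) (hα : α ∈ posRoots R f)
    (k : ℕ) (hk : 2 * ⟪lam, α⟫ / ⟪α, α⟫ = (k : ℝ)) :
    IsLeast (decompLengths (posRoots R f) ((2 * ⟪lam, α⟫ / ⟪α, α⟫) • α)) k := by
  have hαR : α ∈ R := hα.1
  have hα0 : ⟪α, α⟫ ≠ (0:ℝ) := fun h =>
    hR.ne_zero α hαR (inner_self_eq_zero.mp h)
  constructor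
  · refine ⟨List.replicate k α, ?_, ?_, List.length_replicate⟩
    · intro β hβ
      rw [List.eq_of_mem_replicate hβ]; exact hα
    · rw [List.sum_replicate, hk, Nat.cast_smul_eq_nsmul]
  · rintro N ⟨l, hl, hsum, hlen⟩
    -- pair with the coroot of α
    have key : ∀ β ∈ l, 2 * ⟪β, α⟫ / ⟪α, α⟫ ≤ 2 := by
      intro β hβ
      rcases hnoG2 α hαR β (hl β hβ).1 with h|h|h|h|h <;> rw [h] <;> norm_num
    have hLsum : (l.map (fun β => 2 * ⟪β, α⟫ / ⟪α, α⟫)).sum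
        = 2 * ⟪l.sum, α⟫ / ⟪α, α⟫ :=
      aux_list_sum α l
    have hub : (l.map (fun β => 2 * ⟪β, α⟫ / ⟪α, α⟫)).sum ≤ (N : ℝ) * 2 := by
      have := List.sum_le_card_nsmul (l.map (fun β => 2 * ⟪β, α⟫ / ⟪α, α⟫)) 2 ?_
      · simpa [hlen, nsmul_eq_mul] using this
      · intro x hx
        rcases List.mem_map.mp hx with ⟨β, hβ, rfl⟩
        exact key β hβ
    have hsumval : 2 * ⟪l.sum, α⟫ / ⟪α, α⟫ = (k : ℝ) * 2 := by
      rw [hsum, hk, inner_smul_left]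
      push_cast
      field_simp
      simp only [conj_trivial]
    have : (k : ℝ) * 2 ≤ (N : ℝ) * 2 := by
      rw [← hsumval, ← hLsum]; exact hub
    have : (k : ℝ) ≤ (N : ℝ) := by linarith
    exact_mod_cast this
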